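/- Consider a one-layer ReLU network with weight matrix W, a compact input uncertainty set X, and a partition {X^(1),…,X^(p)} of X with per-part preactivation bounds l^(j), u^(j) valid on X^(j), satisfying l^(j) ≤ 0 ≤ u^(j) and l^(j) < u^(j) componentwise. Suppose (i) for each j there exists x̄ ∈ X^(j) with W x̄ = l^(j) (the lower preactivation bound is attained), and (ii) L ∈ ℝ is a uniform Lipschitz constant for the relaxation on every part, i.e., for every j and all x₁, x₂ ∈ X^(j), |sup{cᵀz : (x₁,z) ∈ N(W,l^(j),u^(j))} − sup{cᵀz : (x₂,z) ∈ N(W,l^(j),u^(j))}| ≤ L‖x₁ − x₂‖₂. Let d* = max_j d(X^(j)) be the largest diameter among the input parts. Then |f*(X) − max_{j∈{1,…,p}} f̂*(X^(j); l^(j), u^(j))| ≤ L d*. -/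
import Mathlib


open Finset Matrix

noncomputable section

/-- Membership of `(x, z)` in the relaxed ReLU network constraint set `N(W, l, u)`
of a one-layer ReLU network. -/
def InRelax {nx nz : ℕ} (W : Matrix (Fin nz) (Fin nx) ℝ) (l u : Fin nz → ℝ)
    (x : Fin nx → ℝ) (z : Fin nz → ℝ) : Prop :=
  ∀ i, 0 ≤ z i ∧ W.mulVec x i ≤ z i ∧
    z i ≤ u i * (W.mulVec x i - l i) / (u i - l i)

/-- Values `cᵀ ReLU(Wx)` of the true network over `X`. -/
def trueVals {nx nz : ℕ} (W : Matrix (Fin nz) (Fin nx) ℝ) (c : Fin nz → ℝ)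
    (X : Set (EuclideanSpace ℝ (Fin nx))) : Set ℝ :=
  {v | ∃ x ∈ X, v = ∑ i, c i * max (W.mulVec x i) 0}

/-- Values `cᵀ z` over the LP relaxation feasible set. -/
def hatVals {nx nz : ℕ} (W : Matrix (Fin nz) (Fin nx) ℝ) (c : Fin nz → ℝ)
    (X : Set (EuclideanSpace ℝ (Fin nx))) (l u : Fin nz → ℝ) : Set ℝ :=
  {v | ∃ x z, x ∈ X ∧ InRelax W l u x z ∧ v = ∑ i, c i * z i}

/-- Values `cᵀ z` of the inner LP `sup{cᵀz : (x, z) ∈ N(W,l,u)}` for a fixed `x`. -/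
def innerVals {nx nz : ℕ} (W : Matrix (Fin nz) (Fin nx) ℝ) (c : Fin nz → ℝ)
    (l u : Fin nz → ℝ) (x : EuclideanSpace ℝ (Fin nx)) : Set ℝ :=
  {v | ∃ z, InRelax W l u x z ∧ v = ∑ i, c i * z i}

/-- diameter bound: for a one-layer ReLU network with a partition of
the compact input uncertainty set `X`, per-part valid bounds whose lower bound is
attained on each part, and a uniform Lipschitz constant `L` for the per-part
relaxation values, the gap between the unrelaxed problem and the partitioned LP
relaxation is at most `L d*`, where `d*` is the largest diameter among the parts. -/
theorem diameter_bound {nx nz p : ℕ}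
    (W : Matrix (Fin nz) (Fin nx) ℝ) (c : Fin nz → ℝ)
    (X : Set (EuclideanSpace ℝ (Fin nx))) (hXcompact : IsCompact X)
    (Xp : Fin p → Set (EuclideanSpace ℝ (Fin nx)))
    -- `{X⁽ʲ⁾}` is a partition of `X`
    (hcover : (⋃ j, Xp j) = X)
    (hdisj : ∀ j k, j ≠ k → Xp j ∩ Xp k = ∅)
    -- per-part preactivation bounds: valid, with `l⁽ʲ⁾ ≤ 0 ≤ u⁽ʲ⁾` and `l⁽ʲ⁾ < u⁽ʲ⁾`
    (lp up : Fin p → Fin nz → ℝ)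
    (hpsign : ∀ j i, lp j i ≤ 0 ∧ 0 ≤ up j i ∧ lp j i < up j i)
    (hpvalid : ∀ j, ∀ x ∈ Xp j, ∀ i, lp j i ≤ W.mulVec x i ∧ W.mulVec x i ≤ up j i)
    -- (i) the lower preactivation bound is attained on each part
    (hattain : ∀ j, ∃ xbar ∈ Xp j, W.mulVec xbar = lp j)
    -- (ii) `L` is a uniform Lipschitz constant for the relaxation on every part
    (L : ℝ)
    (hlip : ∀ j, ∀ x₁ ∈ Xp j, ∀ x₂ ∈ Xp j,
      |sSup (innerVals W c (lp j) (up j) x₁) -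
        sSup (innerVals W c (lp j) (up j) x₂)| ≤ L * ‖x₁ - x₂‖)
    -- the inner suprema are attained
    (hinner : ∀ j, ∀ x ∈ Xp j, ∃ v, IsGreatest (innerVals W c (lp j) (up j) x) v)
    -- attained optimal values `f*(X)` and `f̂*(X⁽ʲ⁾; l⁽ʲ⁾, u⁽ʲ⁾)`
    (fstar : ℝ) (hfstar : IsGreatest (trueVals W c X) fstar)
    (Fhat : Fin p → ℝ)
    (hFhat : ∀ j, IsGreatest (hatVals W c (Xp j) (lp j) (up j)) (Fhat j))
    -- the largest diameter among the input parts
    (dstar : ℝ) (hdstar : dstar = ⨆ j, Metric.diam (Xp j)) :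
    |fstar - ⨆ j, Fhat j| ≤ L * dstar := by
  obtain ⟨xstar, hxstarX, hfstareq⟩ := hfstar.1
  have hp : 0 < p := by
    by_contra h
    push_neg at h
    interval_cases p
    have hXe : X = (∅ : Set (EuclideanSpace ℝ (Fin nx))) := by
      rw [← hcover]; simp
    exact absurd (hXe ▸ hxstarX) (Set.notMem_empty _)
  haveI : Nonempty (Fin p) := ⟨⟨0, hp⟩⟩
  have hsub : ∀ j, Xp j ⊆ X := fun j => hcover ▸ Set.subset_iUnion Xp j
  have hbdd : ∀ j, Bornology.IsBounded (Xp j) := fun j =>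
    hXcompact.isBounded.subset (hsub j)
  have hdstar_ge : ∀ j, Metric.diam (Xp j) ≤ dstar := by
    intro j
    rw [hdstar]
    exact le_ciSup (Set.Finite.bddAbove (Set.finite_range fun k => Metric.diam (Xp k))) j
  -- key: Lipschitz distance bound
  have hkey : ∀ j, ∀ x₁ ∈ Xp j, ∀ x₂ ∈ Xp j, L * ‖x₁ - x₂‖ ≤ L * dstar := by
    intro j x₁ h₁ x₂ h₂
    rcases le_or_gt 0 L with hL | hL
    · have hle : ‖x₁ - x₂‖ ≤ dstar := by
        rw [← dist_eq_norm]
        exact le_trans (Metric.dist_le_diam_of_mem (hbdd j) h₁ h₂) (hdstar_ge j)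
      exact mul_le_mul_of_nonneg_left hle hL
    · have hzero : ∀ k, ∀ y₁ ∈ Xp k, ∀ y₂ ∈ Xp k, dist y₁ y₂ ≤ 0 := by
        intro k y₁ hy₁ y₂ hy₂
        have h1 := hlip k y₁ hy₁ y₂ hy₂
        have h0 : 0 ≤ L * ‖y₁ - y₂‖ := le_trans (abs_nonneg _) h1
        have hn := norm_nonneg (y₁ - y₂)
        rw [dist_eq_norm]
        nlinarith
      have hd0 : dstar ≤ 0 := by
        rw [hdstar]
        exact ciSup_le fun k => Metric.diam_le_of_forall_dist_le le_rfl (hzero k)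
      have hd0' : 0 ≤ dstar :=
        le_trans (Metric.diam_nonneg (s := Xp ⟨0, hp⟩)) (hdstar_ge ⟨0, hp⟩)
      have hn0 : ‖x₁ - x₂‖ ≤ 0 := by rw [← dist_eq_norm]; exact hzero j x₁ h₁ x₂ h₂
      have hn0' : ‖x₁ - x₂‖ = 0 := le_antisymm hn0 (norm_nonneg _)
      rw [hn0', le_antisymm hd0 hd0']
  -- ReLU point is feasible in the relaxation
  have hfeas : ∀ j, ∀ x ∈ Xp j,
      InRelax W (lp j) (up j) x (fun i => max (W.mulVec x i) 0) := by
    intro j x hx i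
    obtain ⟨hl0, hu0, hlu⟩ := hpsign j i
    obtain ⟨hlx, hxu⟩ := hpvalid j x hx i
    refine ⟨le_max_right _ _, le_max_left _ _, ?_⟩
    rw [le_div_iff₀ (by linarith : (0:ℝ) < up j i - lp j i)]
    rcases le_or_gt (W.mulVec x i) 0 with h | h
    · simp only [max_eq_right h]; nlinarith
    · simp only [max_eq_left h.le]; nlinarith
  -- collapse of the relaxation at the point attaining the lower bound
  have hcollapse : ∀ j (xbar : EuclideanSpace ℝ (Fin nx)), W.mulVec xbar = lp j →
      sSup (innerVals W c (lp j) (up j) xbar) = 0 := by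
    intro j xbar hW
    have hset : innerVals W c (lp j) (up j) xbar = {0} := by
      ext v
      simp only [innerVals, Set.mem_setOf_eq, Set.mem_singleton_iff]
      constructor
      · rintro ⟨z, hz, rfl⟩
        have hz0 : ∀ i, z i = 0 := by
          intro i
          have h1 := (hz i).1
          have h2 := (hz i).2.2
          rw [hW] at h2
          simp at h2
          linarith
        exact Finset.sum_eq_zero fun i _ => by rw [hz0 i, mul_zero]
      · rintro rfl
        refine ⟨fun _ => 0, fun i => ⟨le_rfl, ?_, ?_⟩, ?_⟩
        · rw [hW]; exact (hpsign j i).1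
        · rw [hW]; simp
        · simp
    rw [hset, csSup_singleton]
  -- 0 ≤ fstar via the attaining points
  have hfstar_nonneg : 0 ≤ fstar := by
    obtain ⟨xbar, hxbar, hWbar⟩ := hattain ⟨0, hp⟩
    refine hfstar.2 ⟨xbar, hsub _ hxbar, ?_⟩
    rw [hWbar]
    exact (Finset.sum_eq_zero fun i _ => by
      rw [max_eq_right (hpsign ⟨0, hp⟩ i).1, mul_zero]).symm
  -- (1) fstar ≤ ⨆ j, Fhat j
  have h1 : fstar ≤ ⨆ j, Fhat j := by
    have hx' : xstar ∈ ⋃ j, Xp j := hcover ▸ hxstarX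
    obtain ⟨j₀, hj₀⟩ := Set.mem_iUnion.mp hx'
    have hmem : fstar ∈ hatVals W c (Xp j₀) (lp j₀) (up j₀) :=
      ⟨xstar, fun i => max (W.mulVec xstar i) 0, hj₀, hfeas j₀ xstar hj₀, hfstareq⟩
    exact le_trans ((hFhat j₀).2 hmem)
      (le_ciSup (Set.Finite.bddAbove (Set.finite_range _)) j₀)
  -- (2) ⨆ j, Fhat j ≤ fstar + L * dstar
  have h2 : (⨆ j, Fhat j) ≤ fstar + L * dstar := by
    refine ciSup_le fun j => ?_
    obtain ⟨x, z, hx, hzf, hFeq⟩ := (hFhat j).1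
    obtain ⟨v, hv⟩ := hinner j x hx
    have hsup : sSup (innerVals W c (lp j) (up j) x) = v := hv.csSup_eq
    have hFv : Fhat j ≤ v := hFeq ▸ hv.2 ⟨z, hzf, rfl⟩
    obtain ⟨xbar, hxbar, hWbar⟩ := hattain j
    have hlipx := hlip j x hx xbar hxbar
    have hkeyx := hkey j x hx xbar hxbar
    have hcol := hcollapse j xbar hWbar
    rw [hsup, hcol] at hlipx
    have habs := le_abs_self (v - 0)
    linarith
  rw [abs_le]
  constructor <;> linarith
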